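/- arXiv:1509.04552 — 5 statements merged into one kernel-verified Lean document; each statement's English description precedes it below -/
import Mathlib

section
/- Let ρ : [0,1]² → ℝ be continuous, strictly positive, with uniform marginals (∫₀¹ρ(x,y)dx = ∫₀¹ρ(x,y)dy = 1 for all x,y). Let σ_n ∈ S_n be a sequence of permutations such that the empirical measures ν_{σ_n} := (1/n)Σ_{i=1}^n δ_{(i/n, σ_n(i)/n)} converge weakly to a probability measure μ on [0,1]². Then λ_n := Σ_{p=1}^n ρ(p/n, σ_n(p)/n) / (Σ_{q=1}^n ρ(p/n, q/n)) converges to ∫_{[0,1]²} ρ dμ as n → ∞. -/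
open MeasureTheory Filter

lemma riemann_unif (ρ : ℝ × ℝ → ℝ)
    (hcont : ContinuousOn ρ (Set.Icc 0 1 ×ˢ Set.Icc 0 1))
    (hmarg1 : ∀ x ∈ Set.Icc (0:ℝ) 1, ∫ y in (0:ℝ)..1, ρ (x, y) = 1)
    {ε : ℝ} (hε : 0 < ε) :
    ∃ N : ℕ, 1 ≤ N ∧ ∀ n, N ≤ n → ∀ x ∈ Set.Icc (0:ℝ) 1,
      |(∑ q : Fin n, ρ (x, (((q : ℕ) : ℝ) + 1) / n)) / n - 1| ≤ ε := by
  have hQc : IsCompact (Set.Icc (0:ℝ) 1 ×ˢ Set.Icc (0:ℝ) 1) := isCompact_Icc.prod isCompact_Icc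
  have hu : UniformContinuousOn ρ (Set.Icc (0:ℝ) 1 ×ˢ Set.Icc (0:ℝ) 1) :=
    hQc.uniformContinuousOn_of_continuous hcont
  rw [Metric.uniformContinuousOn_iff] at hu
  obtain ⟨δ, hδ, hδ'⟩ := hu ε hε
  obtain ⟨N₀, hN₀⟩ := exists_nat_one_div_lt hδ
  refine ⟨N₀ + 1, Nat.le_add_left 1 N₀, fun n hn x hx => ?_⟩
  have hn1 : 1 ≤ n := le_trans (Nat.le_add_left 1 N₀) hn
  have npos : (0:ℝ) < n := by exact_mod_cast hn1
  have hinv : (1:ℝ) / n < δ := by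
    calc (1:ℝ) / n ≤ 1 / (N₀ + 1) := by
          apply one_div_le_one_div_of_le
          · positivity
          · exact_mod_cast hn
      _ < δ := hN₀
  set a : ℕ → ℝ := fun k => (k : ℝ) / n with ha
  -- continuity of the slice
  have hslice : ContinuousOn (fun y => ρ (x, y)) (Set.Icc 0 1) := by
    apply hcont.comp (Continuous.continuousOn (by continuity))
    intro y hy
    exact ⟨hx, hy⟩
  have hsub : ∀ k, k < n → Set.uIcc (a k) (a (k+1)) ⊆ Set.Icc (0:ℝ) 1 := by
    intro k hk
    rw [Set.uIcc_of_le (by apply div_le_div_of_nonneg_right _ npos.le; push_cast; linarith)]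
    apply Set.Icc_subset_Icc
    · positivity
    · rw [div_le_one npos]; exact_mod_cast hk
  have hint : ∀ k, k < n → IntervalIntegrable (fun y => ρ (x, y)) volume (a k) (a (k+1)) := by
    intro k hk
    exact (hslice.mono (hsub k hk)).intervalIntegrable
  have key : ∑ k ∈ Finset.range n, ∫ y in a k..a (k+1), ρ (x, y) = 1 := by
    rw [intervalIntegral.sum_integral_adjacent_intervals hint]
    have : a 0 = 0 := by simp [ha]
    have h2 : a n = 1 := by simp [ha]; omega
    rw [this, h2, hmarg1 x hx]
  -- rewrite the sum
  have hrw : (∑ q : Fin n, ρ (x, (((q : ℕ) : ℝ) + 1) / n)) / n - 1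
      = ∑ k ∈ Finset.range n, (ρ (x, ((k : ℝ) + 1) / n) / n - ∫ y in a k..a (k+1), ρ (x, y)) := by
    rw [Finset.sum_sub_distrib, key, ← Finset.sum_div,
      Fin.sum_univ_eq_sum_range (fun k => ρ (x, ((k : ℝ) + 1) / n)) n]
  rw [hrw]
  have hterm : ∀ k ∈ Finset.range n,
      |ρ (x, ((k : ℝ) + 1) / n) / n - ∫ y in a k..a (k+1), ρ (x, y)| ≤ ε / n := by
    intro k hk
    rw [Finset.mem_range] at hk
    have hk1n : ((k:ℝ) + 1) / n ∈ Set.Icc (0:ℝ) 1 := by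
      constructor
      · positivity
      · rw [div_le_one npos]; exact_mod_cast hk
    have hconst : ρ (x, ((k : ℝ) + 1) / n) / n
        = ∫ _ in a k..a (k+1), ρ (x, ((k : ℝ) + 1) / n) := by
      rw [intervalIntegral.integral_const, smul_eq_mul, ha]
      push_cast
      field_simp
      ring
    rw [hconst, ← intervalIntegral.integral_sub (intervalIntegrable_const) (hint k hk)]
    have hb : ∀ y ∈ Set.uIoc (a k) (a (k+1)),
        ‖ρ (x, ((k : ℝ) + 1) / n) - ρ (x, y)‖ ≤ ε := by
      intro y hy
      have hle : a k ≤ a (k+1) := by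
        apply div_le_div_of_nonneg_right _ npos.le; push_cast; linarith
      rw [Set.uIoc_of_le hle] at hy
      have hy1 : y ∈ Set.Icc (0:ℝ) 1 := by
        have := hsub k hk
        rw [Set.uIcc_of_le hle] at this
        exact this (Set.Ioc_subset_Icc_self hy)
      have hdist : dist ((x, ((k : ℝ) + 1) / n) : ℝ × ℝ) (x, y) < δ := by
        rw [Prod.dist_eq]
        simp only [dist_self]
        have : dist (((k : ℝ) + 1) / n) y < δ := by
          rw [Real.dist_eq, abs_of_nonneg (by simp [ha] at hy; push_cast at hy ⊢; linarith [hy.2])]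
          have : ((k:ℝ)+1)/n - y ≤ 1/n := by
            simp [ha] at hy
            have : (k : ℝ)/n ≤ y := by push_cast at hy ⊢; linarith [hy.1]
            have heq : ((k:ℝ)+1)/n - (k:ℝ)/n = 1/n := by field_simp; ring
            linarith
          linarith
        simp [this, hδ]
      have := hδ' _ ⟨hx, hk1n⟩ _ ⟨hx, hy1⟩ hdist
      rw [Real.dist_eq] at this
      exact le_of_lt this
    calc ‖∫ y in a k..a (k+1), (ρ (x, ((k : ℝ) + 1) / n) - ρ (x, y))‖
        ≤ ε * |a (k+1) - a k| := intervalIntegral.norm_integral_le_of_norm_le_const hb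
      _ = ε / n := by
          rw [ha]
          have : ((k:ℕ)+1 : ℝ)/n - (k:ℝ)/n = 1/n := by push_cast; field_simp; ring
          rw [show ((↑(k+1) : ℝ)/n - (k:ℝ)/n) = 1/n by push_cast; field_simp; ring]
          rw [abs_of_pos (by positivity)]
          ring
  calc |∑ k ∈ Finset.range n, (ρ (x, ((k : ℝ) + 1) / n) / n - ∫ y in a k..a (k+1), ρ (x, y))|
      ≤ ∑ k ∈ Finset.range n, |ρ (x, ((k : ℝ) + 1) / n) / n - ∫ y in a k..a (k+1), ρ (x, y)| :=
        Finset.abs_sum_le_sum_abs _ _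
    _ ≤ ∑ _k ∈ Finset.range n, ε / n := Finset.sum_le_sum hterm
    _ = ε := by
        rw [Finset.sum_const, Finset.card_range, nsmul_eq_mul]
        field_simp

theorem stmt5 (ρ : ℝ × ℝ → ℝ)
    (hcont : ContinuousOn ρ (Set.Icc 0 1 ×ˢ Set.Icc 0 1))
    (hpos : ∀ z ∈ Set.Icc (0:ℝ) 1 ×ˢ Set.Icc (0:ℝ) 1, 0 < ρ z)
    (hmarg1 : ∀ x ∈ Set.Icc (0:ℝ) 1, ∫ y in (0:ℝ)..1, ρ (x, y) = 1)
    (hmarg2 : ∀ y ∈ Set.Icc (0:ℝ) 1, ∫ x in (0:ℝ)..1, ρ (x, y) = 1)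
    (σ : ∀ n : ℕ, Equiv.Perm (Fin n))
    (μ : Measure (ℝ × ℝ)) [IsProbabilityMeasure μ]
    (hsupp : μ (Set.Icc (0:ℝ) 1 ×ˢ Set.Icc (0:ℝ) 1)ᶜ = 0)
    (hconv : ∀ f : ℝ × ℝ → ℝ, Continuous f → (∃ C, ∀ z, |f z| ≤ C) →
      Tendsto (fun n : ℕ =>
          (1 / (n : ℝ)) * ∑ i : Fin n, f (((i : ℕ) + 1 : ℝ) / n, (((σ n i : Fin n) : ℕ) + 1 : ℝ) / n))
        atTop (nhds (∫ z, f z ∂μ))) :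
    Tendsto (fun n : ℕ =>
        ∑ p : Fin n,
          ρ (((p : ℕ) + 1 : ℝ) / n, (((σ n p : Fin n) : ℕ) + 1 : ℝ) / n) /
            ∑ q : Fin n, ρ (((p : ℕ) + 1 : ℝ) / n, ((q : ℕ) + 1 : ℝ) / n))
      atTop (nhds (∫ z, ρ z ∂μ)) := by
  classical
  set Q : Set (ℝ × ℝ) := Set.Icc (0:ℝ) 1 ×ˢ Set.Icc (0:ℝ) 1 with hQ
  have hQc : IsCompact Q := isCompact_Icc.prod isCompact_Icc
  obtain ⟨M₀, hM₀⟩ := hQc.exists_bound_of_continuousOn hcont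
  set M := max M₀ 0 with hM
  have hMnn : 0 ≤ M := le_max_right _ _
  have hMQ : ∀ z ∈ Q, |ρ z| ≤ M := fun z hz => le_trans (hM₀ z hz) (le_max_left _ _)
  -- clamping map
  set c : ℝ → ℝ := fun t => max 0 (min 1 t) with hc
  have hcm : ∀ t, c t ∈ Set.Icc (0:ℝ) 1 :=
    fun t => ⟨le_max_left _ _, max_le zero_le_one (min_le_left _ _)⟩
  have hceq : ∀ t ∈ Set.Icc (0:ℝ) 1, c t = t := by
    intro t ht
    simp only [hc]
    rw [min_eq_right ht.2, max_eq_right ht.1]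
  have hccont : Continuous c := continuous_const.max (continuous_const.min continuous_id)
  set g : ℝ × ℝ → ℝ := fun z => ρ (c z.1, c z.2) with hg
  have hgcont : Continuous g :=
    hcont.comp_continuous ((hccont.comp continuous_fst).prodMk (hccont.comp continuous_snd))
      (fun z => ⟨hcm _, hcm _⟩)
  have hgbd : ∀ z, |g z| ≤ M := fun z => hMQ _ ⟨hcm _, hcm _⟩
  have hgeq : ∀ z ∈ Q, g z = ρ z := by
    rintro ⟨x, y⟩ ⟨hx, hy⟩
    simp only [hg, hceq x hx, hceq y hy]
  have hμeq : ∫ z, g z ∂μ = ∫ z, ρ z ∂μ := by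
    apply integral_congr_ae
    have hQae : Q ∈ ae μ := mem_ae_iff.2 hsupp
    exact Filter.eventuallyEq_of_mem hQae hgeq
  rw [← hμeq]
  have hS := hconv g hgcont ⟨M, hgbd⟩
  set S : ℕ → ℝ := fun n =>
    (1 / (n : ℝ)) * ∑ i : Fin n, g (((i : ℕ) + 1 : ℝ) / n, (((σ n i : Fin n) : ℕ) + 1 : ℝ) / n)
    with hSdef
  set L : ℕ → ℝ := fun n =>
    ∑ p : Fin n,
      ρ (((p : ℕ) + 1 : ℝ) / n, (((σ n p : Fin n) : ℕ) + 1 : ℝ) / n) /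
        ∑ q : Fin n, ρ (((p : ℕ) + 1 : ℝ) / n, ((q : ℕ) + 1 : ℝ) / n) with hLdef
  have key : Tendsto (fun n => L n - S n) atTop (nhds 0) := by
    rw [Metric.tendsto_atTop]
    intro ε hε
    set ε₀ := min (1/2 : ℝ) (ε / (2 * M + 2)) with hε₀def
    have hε₀pos : 0 < ε₀ := lt_min (by norm_num) (by positivity)
    have hε₀half : ε₀ ≤ 1/2 := min_le_left _ _
    have hε₀small : ε₀ ≤ ε / (2 * M + 2) := min_le_right _ _
    obtain ⟨N, hN1, hN⟩ := riemann_unif ρ hcont hmarg1 hε₀pos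
    refine ⟨N, fun n hn => ?_⟩
    have hn1 : 1 ≤ n := hN1.trans hn
    have npos : (0:ℝ) < n := by exact_mod_cast hn1
    rw [Real.dist_eq, sub_zero]
    -- grid points
    have hmem : ∀ p : Fin n, (((p : ℕ) : ℝ) + 1) / n ∈ Set.Icc (0:ℝ) 1 := by
      intro p
      constructor
      · positivity
      · rw [div_le_one npos]
        exact_mod_cast p.isLt
    -- per-term bound
    have hterm : ∀ p : Fin n,
        |ρ (((p : ℕ) + 1 : ℝ) / n, (((σ n p : Fin n) : ℕ) + 1 : ℝ) / n) /
            (∑ q : Fin n, ρ (((p : ℕ) + 1 : ℝ) / n, ((q : ℕ) + 1 : ℝ) / n)) -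
          g (((p : ℕ) + 1 : ℝ) / n, (((σ n p : Fin n) : ℕ) + 1 : ℝ) / n) / n|
        ≤ 2 * M * ε₀ / n := by
      intro p
      set x : ℝ := (((p : ℕ) : ℝ) + 1) / n with hx
      set y : ℝ := ((((σ n p : Fin n) : ℕ) : ℝ) + 1) / n with hy
      have hxm : x ∈ Set.Icc (0:ℝ) 1 := hmem p
      have hym : y ∈ Set.Icc (0:ℝ) 1 := hmem (σ n p)
      set D : ℝ := ∑ q : Fin n, ρ (x, (((q : ℕ) : ℝ) + 1) / n) with hD
      set d : ℝ := D / n with hd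
      have hdb : |d - 1| ≤ ε₀ := hN n hn x hxm
      have hdhalf : (1:ℝ)/2 ≤ d := by
        have := abs_le.1 hdb
        linarith [this.1]
      have hdpos : 0 < d := lt_of_lt_of_le (by norm_num) hdhalf
      have hDd : D = d * n := by rw [hd]; field_simp
      have hρg : ρ (x, y) = g (x, y) := (hgeq (x, y) ⟨hxm, hym⟩).symm
      have halg : ρ (x, y) / D - g (x, y) / n = g (x, y) * (1 - d) / (d * n) := by
        rw [hρg, hDd]
        field_simp
      rw [halg, abs_div, abs_mul]
      rw [abs_of_pos (by positivity : (0:ℝ) < d * n)]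
      have h1d : |1 - d| ≤ ε₀ := by rw [abs_sub_comm]; exact hdb
      calc |g (x, y)| * |1 - d| / (d * n) ≤ M * ε₀ / ((1/2) * n) := by
            apply div_le_div₀ (by positivity) _ (by positivity) _
            · exact mul_le_mul (hgbd _) h1d (abs_nonneg _) hMnn
            · apply mul_le_mul_of_nonneg_right hdhalf npos.le
        _ = 2 * M * ε₀ / n := by field_simp
    have hLS : L n - S n = ∑ p : Fin n,
        (ρ (((p : ℕ) + 1 : ℝ) / n, (((σ n p : Fin n) : ℕ) + 1 : ℝ) / n) /
            (∑ q : Fin n, ρ (((p : ℕ) + 1 : ℝ) / n, ((q : ℕ) + 1 : ℝ) / n)) -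
          g (((p : ℕ) + 1 : ℝ) / n, (((σ n p : Fin n) : ℕ) + 1 : ℝ) / n) / n) := by
      rw [Finset.sum_sub_distrib, hLdef, hSdef]
      simp only []
      congr 1
      rw [Finset.mul_sum]
      congr 1
      funext i
      rw [one_div, inv_mul_eq_div]
    rw [hLS]
    calc |∑ p : Fin n, _| ≤ ∑ p : Fin n,
          |ρ (((p : ℕ) + 1 : ℝ) / n, (((σ n p : Fin n) : ℕ) + 1 : ℝ) / n) /
              (∑ q : Fin n, ρ (((p : ℕ) + 1 : ℝ) / n, ((q : ℕ) + 1 : ℝ) / n)) -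
            g (((p : ℕ) + 1 : ℝ) / n, (((σ n p : Fin n) : ℕ) + 1 : ℝ) / n) / n| :=
          Finset.abs_sum_le_sum_abs _ _
      _ ≤ ∑ _p : Fin n, 2 * M * ε₀ / n := Finset.sum_le_sum (fun p _ => hterm p)
      _ = 2 * M * ε₀ := by
          rw [Finset.sum_const, Finset.card_univ, Fintype.card_fin, nsmul_eq_mul]
          field_simp
      _ < ε := by
          have ht : 0 < ε / (2 * M + 2) := by positivity
          have heq2 : (ε / (2 * M + 2)) * (2 * M + 2) = ε :=
            div_mul_cancel₀ _ (by positivity)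
          nlinarith
  have hfin : (fun n => (L n - S n) + S n) = L := by funext n; ring
  have h2 := key.add hS
  rw [zero_add, hfin] at h2
  exact h2
end

section
/- Let {X_α}_{α ∈ I} be a finite family of Bernoulli random variables that are mutually independent, with p_α := E[X_α], λ := Σ_α p_α, W := Σ_α X_α. Then the total variation distance between the law of W and the Poisson(λ) distribution is at most Σ_{α ∈ I} p_α². -/
open MeasureTheory Finset

namespace LeCam

noncomputable def conv (f g : ℕ → ℝ) : ℕ → ℝ := fun k => ∑ j ∈ Finset.range (k+1), f j * g (k-j)
noncomputable def poi (l : ℝ) (k : ℕ) : ℝ := Real.exp (-l) * l ^ k / k.factorial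
noncomputable def ber (q : ℝ) (k : ℕ) : ℝ := if k = 0 then 1 - q else if k = 1 then q else 0

lemma poi_nonneg {l : ℝ} (hl : 0 ≤ l) (k : ℕ) : 0 ≤ poi l k := by unfold poi; positivity

lemma poi_summable (l : ℝ) : Summable (poi l) := by
  unfold poi; simp_rw [mul_div_assoc]
  exact (Real.summable_pow_div_factorial l).mul_left _

lemma poi_tsum (l : ℝ) : ∑' k, poi l k = 1 := by
  unfold poi; simp_rw [mul_div_assoc]
  rw [tsum_mul_left, show ∑' n : ℕ, l ^ n / n.factorial = Real.exp l by
    rw [Real.exp_eq_exp_ℝ, NormedSpace.exp_eq_tsum_div], ← Real.exp_add]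
  simp

lemma ber_summable (q : ℝ) : Summable (ber q) := by
  apply summable_of_finite_support
  apply Set.Finite.subset (Set.finite_Iic 1)
  intro k hk
  simp only [Function.mem_support, ber] at hk
  by_contra h
  simp only [Set.mem_Iic, not_le] at h
  have h0 : k ≠ 0 := by omega
  have h1 : k ≠ 1 := by omega
  simp [h0, h1] at hk

lemma diff_summable (q l : ℝ) : Summable fun k => |ber q k - poi l k| :=
  ((ber_summable q).sub (poi_summable l)).abs

lemma ber_l1 {q : ℝ} (h0 : 0 ≤ q) (h1 : q ≤ 1) :
    ∑' k, |ber q k - poi q k| ≤ 2 * q ^ 2 := by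
  have hexp1 : 1 - q ≤ Real.exp (-q) := by
    have := Real.add_one_le_exp (-q); linarith
  have hexp2 : Real.exp (-q) ≤ 1 := Real.exp_le_one_iff.mpr (by linarith)
  have hs := diff_summable q q
  rw [Summable.tsum_eq_zero_add hs, Summable.tsum_eq_zero_add ((summable_nat_add_iff 1).mpr hs)]
  have hb0 : ber q 0 = 1 - q := rfl
  have hb1 : ber q 1 = q := rfl
  have hp0 : poi q 0 = Real.exp (-q) := by simp [poi]
  have hp1 : poi q 1 = Real.exp (-q) * q := by simp [poi]
  have htail : ∀ k : ℕ, |ber q (k+1+1) - poi q (k+1+1)| = poi q (k+2) := by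
    intro k
    have : ber q (k+2) = 0 := by simp [ber]
    rw [show k+1+1 = k+2 from rfl, this, zero_sub, abs_neg,
      abs_of_nonneg (by unfold poi; positivity)]
  simp_rw [htail]
  have htailsum : ∑' k : ℕ, poi q (k+2) = 1 - poi q 0 - poi q 1 := by
    have h := poi_tsum q
    rw [Summable.tsum_eq_zero_add (poi_summable q)] at h
    rw [Summable.tsum_eq_zero_add ((summable_nat_add_iff 1).mpr (poi_summable q))] at h
    simp only [show ∀ k:ℕ, k+1+1 = k+2 from fun k => rfl] at h
    linarith
  rw [htailsum, hb0, hb1, hp0, hp1]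
  rw [abs_of_nonpos (by linarith), abs_of_nonneg (by nlinarith)]
  nlinarith [Real.exp_pos (-q)]

lemma conv_nonneg' {f g : ℕ → ℝ} (hf : ∀ k, 0 ≤ f k) (hg : ∀ k, 0 ≤ g k) (k : ℕ) :
    0 ≤ conv f g k :=
  Finset.sum_nonneg fun j _ => mul_nonneg (hf j) (hg _)

lemma conv_summable {f g : ℕ → ℝ} (hf0 : ∀ k, 0 ≤ f k) (hg0 : ∀ k, 0 ≤ g k)
    (hf : Summable f) (hg : Summable g) : Summable (conv f g) := by
  have hfn : Summable fun x => ‖f x‖ := by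
    simpa [Real.norm_eq_abs, abs_of_nonneg (hf0 _)] using hf
  have hgn : Summable fun x => ‖g x‖ := by
    simpa [Real.norm_eq_abs, abs_of_nonneg (hg0 _)] using hg
  exact (summable_norm_sum_mul_range_of_summable_norm hfn hgn).of_norm

lemma conv_tsum {f g : ℕ → ℝ} (hf0 : ∀ k, 0 ≤ f k) (hg0 : ∀ k, 0 ≤ g k)
    (hf : Summable f) (hg : Summable g) :
    ∑' k, conv f g k = (∑' k, f k) * ∑' k, g k := by
  have hfn : Summable fun x => ‖f x‖ := by
    simpa [Real.norm_eq_abs, abs_of_nonneg (hf0 _)] using hf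
  have hgn : Summable fun x => ‖g x‖ := by
    simpa [Real.norm_eq_abs, abs_of_nonneg (hg0 _)] using hg
  exact (tsum_mul_tsum_eq_tsum_sum_range_of_summable_norm hfn hgn).symm

lemma conv_sub_left (f f' g : ℕ → ℝ) (k : ℕ) :
    conv f g k - conv f' g k = conv (f - f') g k := by
  simp [conv, ← Finset.sum_sub_distrib, sub_mul]

lemma conv_sub_right (f g g' : ℕ → ℝ) (k : ℕ) :
    conv f g k - conv f g' k = conv f (g - g') k := by
  simp [conv, ← Finset.sum_sub_distrib, mul_sub]

lemma abs_conv_le {f g : ℕ → ℝ} (hg : ∀ k, 0 ≤ g k) (k : ℕ) :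
    |conv f g k| ≤ conv (fun j => |f j|) g k := by
  refine (Finset.abs_sum_le_sum_abs _ _).trans ?_
  refine Finset.sum_le_sum fun j _ => ?_
  rw [abs_mul, abs_of_nonneg (hg _)]

lemma abs_conv_le' {f g : ℕ → ℝ} (hf : ∀ k, 0 ≤ f k) (k : ℕ) :
    |conv f g k| ≤ conv f (fun j => |g j|) k := by
  refine (Finset.abs_sum_le_sum_abs _ _).trans ?_
  refine Finset.sum_le_sum fun j _ => ?_
  rw [abs_mul, abs_of_nonneg (hf _)]

lemma conv_poi_poi (a b : ℝ) : conv (poi a) (poi b) = poi (a + b) := by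
  funext k
  unfold conv poi
  have hexp : Real.exp (-a) * Real.exp (-b) = Real.exp (-(a+b)) := by
    rw [← Real.exp_add]; ring_nf
  have key : ∀ j ∈ Finset.range (k+1),
      Real.exp (-a) * a ^ j / j.factorial * (Real.exp (-b) * b ^ (k-j) / (k-j).factorial)
      = Real.exp (-(a+b)) * ((a ^ j * b ^ (k-j) * (k.choose j)) / k.factorial) := by
    intro j hj
    have hjk : j ≤ k := Nat.lt_succ_iff.mp (Finset.mem_range.mp hj)
    have hfac : (j.factorial : ℝ) * (k-j).factorial * (k.choose j) = k.factorial := by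
      rw_mod_cast [← Nat.choose_mul_factorial_mul_factorial hjk]; ring
    have h1 : (j.factorial : ℝ) ≠ 0 := Nat.cast_ne_zero.mpr j.factorial_ne_zero
    have h2 : ((k-j).factorial : ℝ) ≠ 0 := Nat.cast_ne_zero.mpr (k-j).factorial_ne_zero
    have h3 : (k.factorial : ℝ) ≠ 0 := Nat.cast_ne_zero.mpr k.factorial_ne_zero
    rw [← hexp]
    field_simp
    linear_combination (-(a ^ j * b ^ (k - j))) * hfac
  rw [Finset.sum_congr rfl key, ← Finset.mul_sum, ← Finset.sum_div]
  rw [show ∑ j ∈ Finset.range (k+1), a ^ j * b ^ (k-j) * (k.choose j : ℝ) = (a+b)^k from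
    (add_pow a b k).symm, mul_div_assoc]

lemma conv_ber_zero (q : ℝ) (f : ℕ → ℝ) : conv (ber q) f 0 = (1-q) * f 0 := by
  simp [conv, ber]

lemma conv_ber_succ (q : ℝ) (f : ℕ → ℝ) (k : ℕ) :
    conv (ber q) f (k+1) = (1-q) * f (k+1) + q * f k := by
  have hsub : ({0,1} : Finset ℕ) ⊆ Finset.range (k+1+1) := by
    intro j hj
    simp only [Finset.mem_insert, Finset.mem_singleton] at hj
    rcases hj with rfl | rfl <;> simp [Finset.mem_range]
  have hzero : ∀ j ∈ Finset.range (k+1+1), j ∉ ({0,1} : Finset ℕ) →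
      ber q j * f (k+1-j) = 0 := by
    intro j _ hj
    simp only [Finset.mem_insert, Finset.mem_singleton, not_or] at hj
    simp [ber, hj.1, hj.2]
  rw [conv, ← Finset.sum_subset hsub hzero]
  rw [Finset.sum_pair (by norm_num : (0:ℕ) ≠ 1)]
  simp [ber]

end LeCam

open LeCam in
/-- Poisson approximation for a sum of independent Bernoulli random variables:
for every set `s ⊆ ℕ`, the difference between `P(W ∈ s)` and `Poi(λ)(s)` is at most
`∑ p_α²`, i.e. the total variation distance is at most `∑ p_α²`. -/
theorem stmt7 {Ω : Type*} [MeasurableSpace Ω] (μ : Measure Ω) [IsProbabilityMeasure μ]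
    {I : Type*} [Fintype I] (X : I → Ω → ℕ)
    (hmeas : ∀ α, Measurable (X α))
    (hBer : ∀ α ω, X α ω = 0 ∨ X α ω = 1)
    (hind : ProbabilityTheory.iIndepFun X μ)
    (p : I → ℝ) (hp : ∀ α, p α = ∫ ω, (X α ω : ℝ) ∂μ)
    (lam : ℝ) (hlam : lam = ∑ α, p α) :
    ∀ s : Set ℕ,
      |(μ {ω | (∑ α, X α ω) ∈ s}).toReal -
          ∑' k : ℕ, Set.indicator s (fun k => Real.exp (-lam) * lam ^ k / k.factorial) k|
        ≤ ∑ α, (p α) ^ 2 := by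
  classical
  intro A
  -- notation
  set W : Finset I → Ω → ℕ := fun s ω => ∑ α ∈ s, X α ω with hW
  have hWmeas : ∀ s : Finset I, Measurable (W s) :=
    fun s => Finset.measurable_sum s fun α _ => hmeas α
  set F : Finset I → ℕ → ℝ := fun s k => (μ (W s ⁻¹' {k})).toReal with hF
  have hF0 : ∀ s k, 0 ≤ F s k := fun s k => ENNReal.toReal_nonneg
  -- total mass one
  have hμsum : ∀ s : Finset I, ∑' k, μ (W s ⁻¹' {k}) = 1 := by
    intro s
    rw [← measure_iUnion (fun k k' hkk' => Set.disjoint_left.mpr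
        (fun ω h1 h2 => hkk' (by
          simp only [Set.mem_preimage, Set.mem_singleton_iff] at h1 h2
          omega)))
      (fun k => hWmeas s (measurableSet_singleton k))]
    have : ⋃ k, W s ⁻¹' {k} = Set.univ := by
      ext ω; simp
    rw [this, measure_univ]
  have hFsummable : ∀ s : Finset I, Summable (F s) := by
    intro s
    apply ENNReal.summable_toReal
    rw [hμsum s]; exact ENNReal.one_ne_top
  have hFtsum : ∀ s : Finset I, ∑' k, F s k = 1 := by
    intro s
    rw [hF]
    rw [← ENNReal.tsum_toReal_eq (fun k => measure_ne_top μ _), hμsum s, ENNReal.toReal_one]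
  -- p α = μ {X α = 1}
  have hpval : ∀ α, p α = (μ (X α ⁻¹' {1})).toReal := by
    intro α
    rw [hp α]
    have : (fun ω => (X α ω : ℝ)) = Set.indicator (X α ⁻¹' {1}) 1 := by
      funext ω
      rcases hBer α ω with h | h <;>
        simp [Set.indicator, h, Set.mem_preimage]
    rw [this, integral_indicator_one (hmeas α (measurableSet_singleton 1))]
    rfl
  have hp0 : ∀ α, 0 ≤ p α := fun α => (hpval α) ▸ ENNReal.toReal_nonneg
  have hp1 : ∀ α, p α ≤ 1 := by
    intro α
    rw [hpval α]
    exact ENNReal.toReal_le_of_le_ofReal one_pos.le (by simpa using prob_le_one)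
  have hq0 : ∀ α, (μ (X α ⁻¹' {0})).toReal = 1 - p α := by
    intro α
    have hset : X α ⁻¹' {0} = (X α ⁻¹' {1})ᶜ := by
      ext ω; rcases hBer α ω with h | h <;> simp [h]
    rw [hset, prob_compl_eq_one_sub (hmeas α (measurableSet_singleton 1)),
      ENNReal.toReal_sub_of_le prob_le_one ENNReal.one_ne_top, ENNReal.toReal_one, hpval α]
  -- convolution identity
  have hconv : ∀ (a : I) (s : Finset I), a ∉ s →
      F (insert a s) = conv (ber (p a)) (F s) := by
    intro a s ha
    have hI : ProbabilityTheory.IndepFun (X a) (∑ j ∈ s, X j) μ :=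
      (ProbabilityTheory.iIndepFun.indepFun_finsetSum_of_notMem hind hmeas ha).symm
    have hmul : ∀ j k' : ℕ, μ (X a ⁻¹' {j} ∩ W s ⁻¹' {k'})
        = μ (X a ⁻¹' {j}) * μ (W s ⁻¹' {k'}) := by
      intro j k'
      have := hI.measure_inter_preimage_eq_mul {j} {k'}
        (measurableSet_singleton j) (measurableSet_singleton k')
      have heq : (∑ j ∈ s, X j) ⁻¹' {k'} = W s ⁻¹' {k'} := by
        ext ω; simp [Finset.sum_apply, hW]
      rwa [heq] at this
    funext k
    cases k with
    | zero =>
      rw [conv_ber_zero]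
      have hset : W (insert a s) ⁻¹' {0} = X a ⁻¹' {0} ∩ W s ⁻¹' {0} := by
        ext ω
        simp only [Set.mem_preimage, Set.mem_singleton_iff, Set.mem_inter_iff, hW,
          Finset.sum_insert ha]
        omega
      show (μ (W (insert a s) ⁻¹' {0})).toReal = _
      rw [hset, hmul 0 0, ENNReal.toReal_mul, hq0 a]
    | succ k =>
      rw [conv_ber_succ]
      have hset : W (insert a s) ⁻¹' {k+1}
          = (X a ⁻¹' {0} ∩ W s ⁻¹' {k+1}) ∪ (X a ⁻¹' {1} ∩ W s ⁻¹' {k}) := by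
        ext ω
        simp only [Set.mem_preimage, Set.mem_singleton_iff, Set.mem_inter_iff, Set.mem_union,
          hW, Finset.sum_insert ha]
        rcases hBer a ω with h | h <;> (rw [h]; omega)
      have hdisj : Disjoint (X a ⁻¹' {0} ∩ W s ⁻¹' {k+1}) (X a ⁻¹' {1} ∩ W s ⁻¹' {k}) := by
        apply Set.disjoint_left.mpr
        intro ω h1 h2
        have := h1.1; have := h2.1
        simp only [Set.mem_preimage, Set.mem_singleton_iff] at *
        omega
      have hm2 : MeasurableSet (X a ⁻¹' {1} ∩ W s ⁻¹' {k}) :=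
        (hmeas a (measurableSet_singleton 1)).inter (hWmeas s (measurableSet_singleton k))
      show (μ (W (insert a s) ⁻¹' {k+1})).toReal = _
      rw [hset, measure_union hdisj hm2, ENNReal.toReal_add (measure_ne_top μ _)
        (measure_ne_top μ _), hmul 0 (k+1), hmul 1 k, ENNReal.toReal_mul, ENNReal.toReal_mul,
        hq0 a, ← hpval a]
  -- main induction
  have key : ∀ s : Finset I,
      ∑' k, |F s k - poi (∑ α ∈ s, p α) k| ≤ 2 * ∑ α ∈ s, (p α) ^ 2 := by
    intro s
    induction s using Finset.induction_on with
    | empty =>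
      have hbase : ∀ k, F ∅ k = poi 0 k := by
        intro k
        cases k with
        | zero =>
          have : W ∅ ⁻¹' {0} = Set.univ := by ext ω; simp [hW]
          simp [hF, this, poi]
        | succ k =>
          have : W ∅ ⁻¹' {k+1} = ∅ := by ext ω; simp [hW]
          simp [hF, this, poi]
      simp [hbase]
    | insert a s ha ih =>
      set q := p a
      set l := ∑ α ∈ s, p α with hl
      have hl0 : 0 ≤ l := Finset.sum_nonneg fun α _ => hp0 α
      have hsum_ins : ∑ α ∈ insert a s, p α = q + l := Finset.sum_insert ha
      have hsq_ins : ∑ α ∈ insert a s, (p α)^2 = q^2 + ∑ α ∈ s, (p α)^2 :=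
        Finset.sum_insert ha
      rw [hsum_ins, hsq_ins]
      have hFs := hFsummable s
      have hGs := poi_summable l
      have hds : Summable fun k => |F s k - poi l k| := (hFs.sub hGs).abs
      have hbps : Summable fun k => |ber q k - poi q k| := diff_summable q q
      -- pointwise bound
      have hpt : ∀ k, |F (insert a s) k - poi (q + l) k|
          ≤ conv (fun j => |ber q j - poi q j|) (F s) k
            + conv (poi q) (fun j => |F s j - poi l j|) k := by
        intro k
        rw [hconv a s ha, ← conv_poi_poi q l]
        have h1 : |conv (ber q) (F s) k - conv (poi q) (F s) k|
            ≤ conv (fun j => |ber q j - poi q j|) (F s) k := by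
          rw [conv_sub_left]
          have := abs_conv_le (f := ber q - poi q) (g := F s) (hF0 s) k
          simpa using this
        have h2 : |conv (poi q) (F s) k - conv (poi q) (poi l) k|
            ≤ conv (poi q) (fun j => |F s j - poi l j|) k := by
          rw [conv_sub_right]
          have := abs_conv_le' (f := poi q) (g := F s - poi l) (poi_nonneg (hp0 a)) k
          simpa using this
        calc |conv (ber q) (F s) k - conv (poi q) (poi l) k|
            ≤ |conv (ber q) (F s) k - conv (poi q) (F s) k|
              + |conv (poi q) (F s) k - conv (poi q) (poi l) k| := abs_sub_le _ _ _
          _ ≤ _ := add_le_add h1 h2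
      have hc1 : Summable (conv (fun j => |ber q j - poi q j|) (F s)) :=
        conv_summable (fun j => abs_nonneg _) (hF0 s) hbps hFs
      have hc2 : Summable (conv (poi q) fun j => |F s j - poi l j|) :=
        conv_summable (poi_nonneg (hp0 a)) (fun j => abs_nonneg _) (poi_summable q) hds
      have hLsum : Summable fun k => |F (insert a s) k - poi (q + l) k| :=
        ((hFsummable (insert a s)).sub (poi_summable _)).abs
      calc ∑' k, |F (insert a s) k - poi (q + l) k|
          ≤ ∑' k, (conv (fun j => |ber q j - poi q j|) (F s) k
              + conv (poi q) (fun j => |F s j - poi l j|) k) :=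
            Summable.tsum_le_tsum hpt hLsum (hc1.add hc2)
        _ = (∑' k, conv (fun j => |ber q j - poi q j|) (F s) k)
              + ∑' k, conv (poi q) (fun j => |F s j - poi l j|) k := Summable.tsum_add hc1 hc2
        _ = (∑' k, |ber q k - poi q k|) * (∑' k, F s k)
              + (∑' k, poi q k) * ∑' k, |F s k - poi l k| := by
            rw [conv_tsum (fun j => abs_nonneg _) (hF0 s) hbps hFs,
              conv_tsum (poi_nonneg (hp0 a)) (fun j => abs_nonneg _) (poi_summable q) hds]
        _ ≤ 2 * q^2 * 1 + 1 * (2 * ∑ α ∈ s, (p α)^2) := by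
            rw [hFtsum s, poi_tsum q]
            have : ∑' k, |ber q k - poi q k| ≤ 2 * q ^ 2 := ber_l1 (hp0 a) (hp1 a)
            have h2 := ih
            nlinarith [tsum_nonneg (L := SummationFilter.unconditional ℕ) (fun k => abs_nonneg (F s k - poi l k))]
        _ = 2 * (q^2 + ∑ α ∈ s, (p α)^2) := by ring
  -- conclude
  have hlam0 : 0 ≤ lam := hlam ▸ Finset.sum_nonneg fun α _ => hp0 α
  have hkeyu : ∑' k, |F Finset.univ k - poi lam k| ≤ 2 * ∑ α, (p α)^2 := by
    have := key Finset.univ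
    rwa [← hlam] at this
  -- P(W ∈ A) as a sum
  have hPA : (μ {ω | (∑ α, X α ω) ∈ A}).toReal = ∑' k, A.indicator (F Finset.univ) k := by
    set E : ℕ → Set Ω := fun k => if k ∈ A then W Finset.univ ⁻¹' {k} else ∅ with hE
    have hEmeas : ∀ k, MeasurableSet (E k) := by
      intro k
      by_cases hk : k ∈ A <;> simp [hE, hk, hWmeas Finset.univ (measurableSet_singleton k)]
    have hEdisj : Pairwise (Function.onFun Disjoint E) := by
      intro k k' hkk'
      by_cases hk : k ∈ A <;> by_cases hk' : k' ∈ A <;>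
        simp only [Function.onFun, hE, hk, hk', if_true, if_false, Set.disjoint_empty,
          Set.empty_disjoint] <;> try exact Set.disjoint_left.mpr fun ω h1 h2 => hkk' (by
            simp only [Set.mem_preimage, Set.mem_singleton_iff] at h1 h2; omega)
    have hEunion : ⋃ k, E k = {ω | (∑ α, X α ω) ∈ A} := by
      ext ω
      simp only [Set.mem_iUnion, Set.mem_setOf_eq, hE]
      constructor
      · rintro ⟨k, hk⟩
        by_cases hkA : k ∈ A
        · simp only [hkA, if_true, Set.mem_preimage, Set.mem_singleton_iff] at hk
          rw [show (∑ α, X α ω) = W Finset.univ ω from rfl, hk]; exact hkA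
        · simp [hkA] at hk
      · intro hωA
        exact ⟨W Finset.univ ω, by simp [hωA, Set.mem_preimage, hW]⟩
    rw [← hEunion, measure_iUnion hEdisj hEmeas,
      ENNReal.tsum_toReal_eq (fun k => by
        by_cases hk : k ∈ A <;> simp [hE, hk, measure_ne_top])]
    congr 1
    funext k
    by_cases hk : k ∈ A <;> simp [hE, hk, Set.indicator, hF]
  rw [hPA]
  -- the indicator of poi
  have hGind : (∑' k : ℕ, A.indicator (fun k => Real.exp (-lam) * lam ^ k / k.factorial) k)
      = ∑' k, A.indicator (poi lam) k := rfl
  rw [hGind]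
  -- TV bound
  set Fu := F Finset.univ with hFu
  set G := poi lam with hG
  have hFus : Summable Fu := hFsummable _
  have hGsm : Summable G := poi_summable lam
  have hFut : ∑' k, Fu k = 1 := hFtsum _
  have hGt : ∑' k, G k = 1 := poi_tsum lam
  have hindsum : ∀ (B : Set ℕ) (f : ℕ → ℝ), (∀ k, 0 ≤ f k) → Summable f →
      Summable (B.indicator f) := by
    intro B f h0 hs
    refine hs.of_nonneg_of_le (fun k => Set.indicator_nonneg (fun k _ => h0 k) k) ?_
    intro k
    exact Set.indicator_le_self' (fun k _ => h0 k) k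
  have hdabs : Summable fun k => |Fu k - G k| := (hFus.sub hGsm).abs
  have hSA : ∀ B : Set ℕ, |(∑' k, B.indicator Fu k) - ∑' k, B.indicator G k|
      ≤ ∑' k, B.indicator (fun k => |Fu k - G k|) k := by
    intro B
    rw [← Summable.tsum_sub (hindsum B Fu (hF0 _) hFus) (hindsum B G (poi_nonneg hlam0) hGsm)]
    have heq : ∀ k, B.indicator Fu k - B.indicator G k = B.indicator (fun j => Fu j - G j) k := by
      intro k; by_cases hk : k ∈ B <;> simp [Set.indicator, hk]
    simp_rw [heq]
    have hnorm := norm_tsum_le_tsum_norm (f := fun k => B.indicator (fun j => Fu j - G j) k)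
      (by
        refine hdabs.of_nonneg_of_le (fun k => norm_nonneg _) ?_
        intro k
        by_cases hk : k ∈ B <;> simp [Set.indicator, hk, Real.norm_eq_abs, abs_nonneg])
    rw [Real.norm_eq_abs] at hnorm
    refine hnorm.trans_eq ?_
    congr 1
    funext k
    by_cases hk : k ∈ B <;> simp [Set.indicator, hk, Real.norm_eq_abs]
  have hsplit : ∀ f : ℕ → ℝ, (∀ k, 0 ≤ f k) → Summable f →
      (∑' k, A.indicator f k) + ∑' k, Aᶜ.indicator f k = ∑' k, f k := by
    intro f h0 hs
    rw [← Summable.tsum_add (hindsum A f h0 hs) (hindsum Aᶜ f h0 hs)]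
    congr 1
    funext k
    by_cases hk : k ∈ A <;> simp [Set.indicator, hk]
  have hD1 := hSA A
  have hD2 := hSA Aᶜ
  have hneg : (∑' k, Aᶜ.indicator Fu k) - ∑' k, Aᶜ.indicator G k
      = -((∑' k, A.indicator Fu k) - ∑' k, A.indicator G k) := by
    have h1 := hsplit Fu (hF0 _) hFus
    have h2 := hsplit G (poi_nonneg hlam0) hGsm
    rw [hFut] at h1; rw [hGt] at h2
    linarith
  rw [hneg, abs_neg] at hD2
  have htot : (∑' k, A.indicator (fun k => |Fu k - G k|) k)
      + ∑' k, Aᶜ.indicator (fun k => |Fu k - G k|) k = ∑' k, |Fu k - G k| :=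
    hsplit _ (fun k => abs_nonneg _) hdabs
  have := hkeyu
  linarith
end

section
/- Fix θ ∈ ℝ and let R_{n,θ} be the probability distribution on S_n with R_{n,θ}(π) = e^{θ·fix(π) − Z_n(θ)}, where fix(π) is the number of fixed points and Z_n(θ) is the log-normalizing constant. Then for every λ ∈ ℝ, the moment generating function E_{R_{n,θ}}[e^{λ·fix(π_n)}] = e^{Z_n(θ+λ) − Z_n(θ)} converges to exp(e^θ(e^λ − 1)) as n → ∞; consequently fix(π_n) under R_{n,θ} converges in distribution to Poisson(e^θ). -/
open Filter

/-- The number of fixed points of a permutation of `{1,...,n}`. -/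
def fixpts {n : ℕ} (π : Equiv.Perm (Fin n)) : ℕ :=
  (Finset.univ.filter fun i => π i = i).card

/-- The log-normalizing constant `Z_n(θ) = log ∑_{π ∈ S_n} e^{θ·fix(π)}`. -/
noncomputable def Zfix (n : ℕ) (θ : ℝ) : ℝ :=
  Real.log (∑ π : Equiv.Perm (Fin n), Real.exp (θ * fixpts π))

/-! ### Auxiliary lemmas -/

lemma card_fixset_eq (n : ℕ) (t : Finset (Fin n)) :
    (Finset.univ.filter fun π : Equiv.Perm (Fin n) =>
        Finset.univ.filter (fun i => π i = i) = t).card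
      = numDerangements (n - t.card) := by
  classical
  rw [← Fintype.card_subtype]
  have e1 : {π : Equiv.Perm (Fin n) // Finset.univ.filter (fun i => π i = i) = t}
      ≃ derangements {a : Fin n // ¬ a ∈ t} := by
    refine (Equiv.subtypeEquivRight ?_).trans
      (derangements.subtypeEquiv (fun a : Fin n => ¬ a ∈ t)).symm
    intro f
    simp only [Finset.ext_iff, Finset.mem_filter, Finset.mem_univ, true_and, not_not,
      Function.mem_fixedPoints, Function.IsFixedPt]
    constructor
    · intro h a; constructor
      · intro ha; exact (h a).2 ha
      · intro ha; exact (h a).1 ha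
    · intro h a; exact ⟨fun ha => (h a).2 ha, fun ha => (h a).1 ha⟩
  rw [Fintype.card_congr e1, card_derangements_eq_numDerangements]
  congr 1
  rw [Fintype.card_subtype_compl]
  simp

lemma card_fix_eq (n k : ℕ) :
    (Finset.univ.filter fun π : Equiv.Perm (Fin n) => fixpts π = k).card
      = n.choose k * numDerangements (n - k) := by
  classical
  rw [Finset.card_eq_sum_card_fiberwise
    (f := fun π : Equiv.Perm (Fin n) => Finset.univ.filter fun i => π i = i)
    (t := Finset.powersetCard k Finset.univ) (by
      intro π hπ
      rw [Finset.mem_coe, Finset.mem_filter] at hπ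
      rw [Finset.mem_coe, Finset.mem_powersetCard]
      exact ⟨Finset.subset_univ _, hπ.2⟩)]
  have hstep : ∀ t ∈ Finset.powersetCard k (Finset.univ : Finset (Fin n)),
      ((Finset.univ.filter fun π : Equiv.Perm (Fin n) => fixpts π = k).filter
        (fun π => Finset.univ.filter (fun i => π i = i) = t)).card
      = numDerangements (n - k) := by
    intro t ht
    have htc : t.card = k := (Finset.mem_powersetCard.1 ht).2
    have : ((Finset.univ.filter fun π : Equiv.Perm (Fin n) => fixpts π = k).filter
        (fun π => Finset.univ.filter (fun i => π i = i) = t))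
        = Finset.univ.filter (fun π : Equiv.Perm (Fin n) =>
            Finset.univ.filter (fun i => π i = i) = t) := by
      rw [Finset.filter_filter]
      apply Finset.filter_congr
      intro π _
      constructor
      · intro h; exact h.2
      · intro h; exact ⟨by rw [fixpts, h, htc], h⟩
    rw [this, card_fixset_eq, htc]
  rw [Finset.sum_congr rfl hstep, Finset.sum_const, Finset.card_powersetCard, Finset.card_univ,
    Fintype.card_fin, smul_eq_mul]

lemma card_fixing (n : ℕ) (t : Finset (Fin n)) :
    (Finset.univ.filter fun π : Equiv.Perm (Fin n) => ∀ a ∈ t, π a = a).card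
      = (n - t.card).factorial := by
  classical
  rw [← Fintype.card_subtype]
  have e1 : {π : Equiv.Perm (Fin n) // ∀ a ∈ t, π a = a}
      ≃ Equiv.Perm {a : Fin n // ¬ a ∈ t} := by
    refine (Equiv.subtypeEquivRight ?_).trans
      (Equiv.Perm.subtypeEquivSubtypePerm (fun a : Fin n => ¬ a ∈ t)).symm
    intro f
    simp only [not_not]
  rw [Fintype.card_congr e1, Fintype.card_perm, Fintype.card_subtype_compl]
  simp

/-- Truncated exponential series. -/
noncomputable def psum (n : ℕ) (y : ℝ) : ℝ := ∑ j ∈ Finset.range (n+1), y^j / j.factorial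

lemma key2 (n : ℕ) (x : ℝ) :
    ∑ π : Equiv.Perm (Fin n), x ^ fixpts π = n.factorial * psum n (x - 1) := by
  classical
  have h1 : ∀ π : Equiv.Perm (Fin n),
      x ^ fixpts π = ∑ t ∈ (Finset.univ.filter fun i => π i = i).powerset,
        (x - 1) ^ t.card := by
    intro π
    set F := Finset.univ.filter fun i : Fin n => π i = i with hF
    have : (x : ℝ) ^ F.card = ∏ _i ∈ F, ((x - 1) + 1) := by
      rw [Finset.prod_const]; norm_num
    rw [fixpts, ← hF, this, Finset.prod_add]
    refine Finset.sum_congr rfl fun t ht => ?_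
    rw [Finset.prod_const, Finset.prod_const, one_pow, mul_one]
  calc ∑ π : Equiv.Perm (Fin n), x ^ fixpts π
      = ∑ π : Equiv.Perm (Fin n), ∑ t ∈ Finset.univ.powerset,
          (if ∀ a ∈ t, π a = a then (x - 1) ^ t.card else 0) := by
        refine Finset.sum_congr rfl fun π _ => ?_
        rw [h1 π, ← Finset.sum_filter]
        congr 1
        ext t
        simp only [Finset.mem_powerset, Finset.mem_filter, Finset.subset_iff,
          Finset.mem_univ, true_and]
        tauto
    _ = ∑ t ∈ Finset.univ.powerset, ((n - t.card).factorial : ℝ) * (x - 1) ^ t.card := by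
        rw [Finset.sum_comm]
        refine Finset.sum_congr rfl fun t _ => ?_
        rw [← Finset.sum_filter, Finset.sum_const, card_fixing, nsmul_eq_mul]
    _ = ∑ j ∈ Finset.range (n+1), (n.choose j) •
          (((n - j).factorial : ℝ) * (x - 1) ^ j) := by
        rw [Finset.sum_powerset_apply_card (f := fun m => ((n - m).factorial : ℝ) * (x-1)^m)]
        simp [Finset.card_univ]
    _ = n.factorial * psum n (x - 1) := by
        rw [psum, Finset.mul_sum]
        refine Finset.sum_congr rfl fun j hj => ?_
        have hj' : j ≤ n := Nat.lt_succ_iff.1 (Finset.mem_range.1 hj)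
        have hc : (n.choose j : ℝ) * j.factorial * (n-j).factorial = n.factorial := by
          exact_mod_cast Nat.choose_mul_factorial_mul_factorial hj'
        have hjf : (j.factorial : ℝ) ≠ 0 := by positivity
        rw [nsmul_eq_mul, ← hc]
        field_simp

lemma sum_exp_eq (n : ℕ) (θ : ℝ) :
    ∑ π : Equiv.Perm (Fin n), Real.exp (θ * fixpts π)
      = n.factorial * psum n (Real.exp θ - 1) := by
  rw [← key2]
  refine Finset.sum_congr rfl fun π _ => ?_
  rw [mul_comm, Real.exp_nat_mul]

lemma sum_exp_pos (n : ℕ) (θ : ℝ) :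
    0 < ∑ π : Equiv.Perm (Fin n), Real.exp (θ * fixpts π) :=
  Finset.sum_pos (fun _π _ => Real.exp_pos _) Finset.univ_nonempty

lemma psum_pos (n : ℕ) (θ : ℝ) : 0 < psum n (Real.exp θ - 1) := by
  have h := sum_exp_pos n θ
  rw [sum_exp_eq] at h
  have hf : (0:ℝ) < n.factorial := by positivity
  nlinarith [hf, h]

lemma exp_Zfix (n : ℕ) (θ : ℝ) :
    Real.exp (Zfix n θ) = n.factorial * psum n (Real.exp θ - 1) := by
  rw [Zfix, Real.exp_log (sum_exp_pos n θ), sum_exp_eq]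

lemma psum_tendsto (y : ℝ) :
    Tendsto (fun n => psum n y) atTop (nhds (Real.exp y)) := by
  have h := (NormedSpace.expSeries_div_hasSum_exp y).tendsto_sum_nat
  rw [← Real.exp_eq_exp_ℝ] at h
  exact h.comp (tendsto_add_atTop_nat 1)

lemma ratio_eq (n : ℕ) (θ lam : ℝ) :
    Real.exp (Zfix n (θ + lam) - Zfix n θ)
      = psum n (Real.exp (θ + lam) - 1) / psum n (Real.exp θ - 1) := by
  have hf : (0:ℝ) < n.factorial := by positivity
  rw [Real.exp_sub, exp_Zfix, exp_Zfix, mul_div_mul_left _ _ (ne_of_gt hf)]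

theorem stmt9 (θ lam : ℝ) :
    (∀ n : ℕ,
      ∑ π : Equiv.Perm (Fin n),
          Real.exp (θ * fixpts π - Zfix n θ) * Real.exp (lam * fixpts π)
        = Real.exp (Zfix n (θ + lam) - Zfix n θ)) ∧
    Tendsto (fun n : ℕ => Real.exp (Zfix n (θ + lam) - Zfix n θ)) atTop
      (nhds (Real.exp (Real.exp θ * (Real.exp lam - 1)))) ∧
    ∀ k : ℕ,
      Tendsto (fun n : ℕ =>
          ∑ π ∈ Finset.univ.filter (fun π : Equiv.Perm (Fin n) => fixpts π = k),
            Real.exp (θ * fixpts π - Zfix n θ)) atTop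
        (nhds (Real.exp (-Real.exp θ) * Real.exp θ ^ k / k.factorial)) := by
  refine ⟨?_, ?_, ?_⟩
  · -- part 1
    intro n
    have h1 : ∀ π : Equiv.Perm (Fin n),
        Real.exp (θ * fixpts π - Zfix n θ) * Real.exp (lam * fixpts π)
          = Real.exp ((θ + lam) * fixpts π) * Real.exp (-(Zfix n θ)) := by
      intro π
      rw [← Real.exp_add, ← Real.exp_add]
      congr 1
      ring
    rw [Finset.sum_congr rfl (fun π _ => h1 π), ← Finset.sum_mul]
    rw [show (∑ π : Equiv.Perm (Fin n), Real.exp ((θ + lam) * fixpts π))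
        = Real.exp (Zfix n (θ + lam)) from (Real.exp_log (sum_exp_pos n (θ + lam))).symm]
    rw [← Real.exp_add, ← sub_eq_add_neg]
  · -- part 2
    have h := Tendsto.div (psum_tendsto (Real.exp (θ + lam) - 1))
      (psum_tendsto (Real.exp θ - 1)) (ne_of_gt (Real.exp_pos _))
    have heq : Real.exp (Real.exp (θ + lam) - 1) / Real.exp (Real.exp θ - 1)
        = Real.exp (Real.exp θ * (Real.exp lam - 1)) := by
      rw [← Real.exp_sub]
      congr 1
      rw [Real.exp_add]
      ring
    rw [heq] at h
    exact Tendsto.congr (fun n => (ratio_eq n θ lam).symm) h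
  · -- part 3
    intro k
    set y := Real.exp θ - 1 with hy
    -- the limiting expression
    have hlim : Tendsto (fun n : ℕ =>
        ((numDerangements (n - k) : ℝ) / (n - k).factorial) *
          (Real.exp (θ * k) / (k.factorial * psum n y))) atTop
        (nhds (Real.exp (-1) * (Real.exp (θ * k) / (k.factorial * Real.exp y)))) := by
      refine Tendsto.mul ?_ ?_
      · exact numDerangements_tendsto_inv_e.comp (tendsto_sub_atTop_nat k)
      · refine Tendsto.div tendsto_const_nhds (Tendsto.const_mul _ (psum_tendsto y)) ?_
        positivity
    have hval : Real.exp (-1) * (Real.exp (θ * k) / (k.factorial * Real.exp y))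
        = Real.exp (-Real.exp θ) * Real.exp θ ^ k / k.factorial := by
      have h1 : Real.exp θ ^ k = Real.exp (θ * k) := by
        rw [mul_comm, Real.exp_nat_mul]
      have h2 : Real.exp (-Real.exp θ) = Real.exp (-1) / Real.exp y := by
        rw [← Real.exp_sub]; congr 1; rw [hy]; ring
      rw [h1, h2]
      have hknz : (k.factorial : ℝ) ≠ 0 := by positivity
      have heynz : Real.exp y ≠ 0 := ne_of_gt (Real.exp_pos _)
      field_simp
    rw [hval] at hlim
    refine Tendsto.congr' ?_ hlim
    filter_upwards [eventually_ge_atTop k] with n hkn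
    -- show the two expressions agree for n ≥ k
    have hsum : (∑ π ∈ Finset.univ.filter (fun π : Equiv.Perm (Fin n) => fixpts π = k),
          Real.exp (θ * fixpts π - Zfix n θ))
        = ((n.choose k * numDerangements (n - k) : ℕ) : ℝ) * Real.exp (θ * k - Zfix n θ) := by
      rw [Finset.sum_congr rfl (fun π hπ => by
        rw [(Finset.mem_filter.1 hπ).2]), Finset.sum_const, nsmul_eq_mul, card_fix_eq]
    rw [hsum]
    have hexpZ : Real.exp (θ * k - Zfix n θ)
        = Real.exp (θ * k) / (n.factorial * psum n y) := by
      rw [Real.exp_sub, exp_Zfix, hy]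
    rw [hexpZ]
    have hc : (n.choose k : ℝ) * k.factorial * (n - k).factorial = n.factorial := by
      exact_mod_cast Nat.choose_mul_factorial_mul_factorial hkn
    have hchoosenz : (n.choose k : ℝ) ≠ 0 :=
      Nat.cast_ne_zero.2 (Nat.choose_pos hkn).ne'
    have hknz : (k.factorial : ℝ) ≠ 0 := by positivity
    have hnknz : ((n - k).factorial : ℝ) ≠ 0 := by positivity
    have hpnz : psum n y ≠ 0 := by
      rw [hy]; exact ne_of_gt (psum_pos n θ)
    push_cast
    rw [← hc]
    field_simp
end

section
/- Fix θ ∈ ℝ and let R_{n,θ}(π) = e^{θ·fix(π) − Z_n(θ)} on S_n, and let P_n = R_{n,0} be the uniform distribution on S_n. Then the Kullback–Leibler divergence D(P_n || R_{n,θ}) = log(e^{Z_n(θ)}/n!) − θ·E_{P_n}[fix(π_n)] converges to e^θ − 1 − θ as n → ∞. -/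
open Filter Finset

-- card of permutations fixing every element of F
lemma cardFix (n : ℕ) (F : Finset (Fin n)) :
    (Finset.univ.filter (fun π : Equiv.Perm (Fin n) => ∀ i ∈ F, π i = i)).card
      = (n - F.card).factorial := by
  classical
  rw [← Fintype.card_subtype]
  have e1 : {π : Equiv.Perm (Fin n) // ∀ i ∈ F, π i = i}
      ≃ {f : Equiv.Perm (Fin n) // ∀ a, ¬ (a ∉ F) → f a = a} :=
    Equiv.subtypeEquivRight (fun f =>
      ⟨fun h a ha => h a (not_not.mp ha), fun h i hi => h i (not_not_intro hi)⟩)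
  have e2 := (Equiv.Perm.subtypeEquivSubtypePerm (fun a : Fin n => a ∉ F)).symm
  have := Fintype.card_congr (e1.trans e2)
  rw [this, Fintype.card_perm, Fintype.card_subtype]
  congr 1
  have : (univ.filter fun a : Fin n => a ∉ F) = Fᶜ := by
    ext a; simp
  rw [this, Finset.card_compl, Fintype.card_fin]

lemma sum_pow_fix (n : ℕ) (y : ℝ) :
    ∑ π : Equiv.Perm (Fin n), (1 + y) ^ fixpts π
      = ∑ k ∈ Finset.range (n + 1),
          ((n.choose k : ℝ) * ((n - k).factorial : ℝ)) * y ^ k := by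
  classical
  have step1 : ∀ π : Equiv.Perm (Fin n),
      (1 + y) ^ fixpts π
        = ∑ t ∈ (univ.filter fun i => π i = i).powerset, y ^ t.card := by
    intro π
    have := Finset.prod_add (fun _ : Fin n => y) (fun _ => (1 : ℝ))
      (univ.filter fun i => π i = i)
    simp only [Finset.prod_const, one_pow, mul_one] at this
    rw [fixpts, add_comm, this]
  calc ∑ π : Equiv.Perm (Fin n), (1 + y) ^ fixpts π
      = ∑ π : Equiv.Perm (Fin n), ∑ t : Finset (Fin n),
          (if ∀ i ∈ t, π i = i then y ^ t.card else 0) := by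
        refine Finset.sum_congr rfl fun π _ => ?_
        rw [step1 π]
        have hpow : (univ.filter fun i => π i = i).powerset
            = univ.filter (fun t : Finset (Fin n) => ∀ i ∈ t, π i = i) := by
          ext t
          simp [Finset.mem_powerset, Finset.subset_iff]
        rw [hpow, Finset.sum_filter]
    _ = ∑ t : Finset (Fin n), ((n - t.card).factorial : ℝ) * y ^ t.card := by
        rw [Finset.sum_comm]
        refine Finset.sum_congr rfl fun t _ => ?_
        rw [← Finset.sum_filter, Finset.sum_const, cardFix, nsmul_eq_mul]
    _ = ∑ k ∈ Finset.range (n + 1),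
          ((n.choose k : ℝ) * ((n - k).factorial : ℝ)) * y ^ k := by
        have : (univ : Finset (Finset (Fin n))) = (univ : Finset (Fin n)).powerset :=
          Finset.powerset_univ.symm
        rw [this, Finset.sum_powerset]
        rw [Finset.card_univ, Fintype.card_fin]
        refine Finset.sum_congr rfl fun k _ => ?_
        have h1 : ∀ t ∈ Finset.powersetCard k (univ : Finset (Fin n)),
            ((n - t.card).factorial : ℝ) * y ^ t.card
              = ((n - k).factorial : ℝ) * y ^ k := by
          intro t ht; rw [(Finset.mem_powersetCard.mp ht).2]
        rw [Finset.sum_congr rfl h1, Finset.sum_const, Finset.card_powersetCard,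
          Finset.card_univ, Fintype.card_fin, nsmul_eq_mul]
        ring

lemma sum_fix_nat (n : ℕ) (hn : 1 ≤ n) :
    ∑ π : Equiv.Perm (Fin n), fixpts π = n.factorial := by
  classical
  have h1 : ∀ π : Equiv.Perm (Fin n),
      fixpts π = ∑ i : Fin n, if π i = i then 1 else 0 := by
    intro π; rw [fixpts, Finset.card_filter]
  rw [Finset.sum_congr rfl fun π _ => h1 π, Finset.sum_comm]
  have h2 : ∀ i : Fin n,
      (∑ π : Equiv.Perm (Fin n), if π i = i then 1 else 0) = (n - 1).factorial := by
    intro i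
    rw [← Finset.card_filter]
    have : (univ.filter fun π : Equiv.Perm (Fin n) => π i = i)
        = univ.filter (fun π : Equiv.Perm (Fin n) => ∀ j ∈ ({i} : Finset (Fin n)), π j = j) := by
      ext π; simp
    rw [this, cardFix, Finset.card_singleton]
  rw [Finset.sum_congr rfl fun i _ => h2 i, Finset.sum_const, Finset.card_univ,
    Fintype.card_fin, smul_eq_mul, Nat.mul_factorial_pred (by omega)]

lemma exp_Z_div (n : ℕ) (θ : ℝ) :
    Real.exp (Zfix n θ) / (n.factorial : ℝ)
      = ∑ k ∈ Finset.range (n + 1), (Real.exp θ - 1) ^ k / (k.factorial : ℝ) := by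
  classical
  have hS : (0 : ℝ) < ∑ π : Equiv.Perm (Fin n), Real.exp (θ * fixpts π) :=
    Finset.sum_pos (fun π _ => Real.exp_pos _) Finset.univ_nonempty
  rw [Zfix, Real.exp_log hS]
  have h1 : ∀ π : Equiv.Perm (Fin n),
      Real.exp (θ * fixpts π) = (1 + (Real.exp θ - 1)) ^ fixpts π := by
    intro π
    rw [mul_comm, Real.exp_nat_mul]
    norm_num
  rw [Finset.sum_congr rfl fun π _ => h1 π, sum_pow_fix, Finset.sum_div]
  refine Finset.sum_congr rfl fun k hk => ?_
  have hk' : k ≤ n := Nat.lt_succ_iff.mp (Finset.mem_range.mp hk)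
  have hfact : (n.choose k : ℝ) * ((n - k).factorial : ℝ)
      = (n.factorial : ℝ) / (k.factorial : ℝ) := by
    have := Nat.choose_mul_factorial_mul_factorial hk'
    have h2 : ((n.choose k : ℝ)) * (k.factorial : ℝ) * ((n - k).factorial : ℝ)
        = (n.factorial : ℝ) := by exact_mod_cast congrArg (fun m : ℕ => (m : ℝ)) this
    field_simp
    linarith [h2]
  rw [hfact]
  have hnf : (n.factorial : ℝ) ≠ 0 := Nat.cast_ne_zero.mpr n.factorial_ne_zero
  have hkf : (k.factorial : ℝ) ≠ 0 := Nat.cast_ne_zero.mpr k.factorial_ne_zero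
  field_simp

lemma tendsto_partial_exp (y : ℝ) :
    Tendsto (fun n : ℕ => ∑ k ∈ Finset.range (n + 1), y ^ k / (k.factorial : ℝ))
      atTop (nhds (Real.exp y)) := by
  have h : HasSum (fun k : ℕ => y ^ k / (k.factorial : ℝ)) (Real.exp y) := by
    rw [Real.exp_eq_exp_ℝ]
    exact NormedSpace.expSeries_div_hasSum_exp y
  exact h.tendsto_sum_nat.comp (tendsto_add_atTop_nat 1)

theorem stmt11 (θ : ℝ) :
    (∀ n : ℕ,
      ∑ π : Equiv.Perm (Fin n),
          (1 / (n.factorial : ℝ)) *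
            Real.log ((1 / (n.factorial : ℝ)) / Real.exp (θ * fixpts π - Zfix n θ))
        = Real.log (Real.exp (Zfix n θ) / n.factorial)
            - θ * ((∑ π : Equiv.Perm (Fin n), (fixpts π : ℝ)) / n.factorial)) ∧
    Tendsto (fun n : ℕ =>
        Real.log (Real.exp (Zfix n θ) / n.factorial)
          - θ * ((∑ π : Equiv.Perm (Fin n), (fixpts π : ℝ)) / n.factorial)) atTop
      (nhds (Real.exp θ - 1 - θ)) := by
  constructor
  · intro n
    have hc : ((n.factorial : ℝ)) ≠ 0 := Nat.cast_ne_zero.mpr n.factorial_ne_zero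
    have hterm : ∀ π : Equiv.Perm (Fin n),
        Real.log ((1 / (n.factorial : ℝ)) / Real.exp (θ * fixpts π - Zfix n θ))
          = -Real.log (n.factorial : ℝ) - (θ * fixpts π - Zfix n θ) := by
      intro π
      rw [Real.log_div (by positivity) (Real.exp_ne_zero _), Real.log_exp,
        one_div, Real.log_inv]
    calc ∑ π : Equiv.Perm (Fin n),
          (1 / (n.factorial : ℝ)) *
            Real.log ((1 / (n.factorial : ℝ)) / Real.exp (θ * fixpts π - Zfix n θ))
        = ∑ π : Equiv.Perm (Fin n),
            ((1 / (n.factorial : ℝ)) * (Zfix n θ - Real.log (n.factorial : ℝ))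
              - (θ / (n.factorial : ℝ)) * (fixpts π : ℝ)) := by
          refine Finset.sum_congr rfl fun π _ => ?_
          rw [hterm π]; ring
      _ = (Finset.univ : Finset (Equiv.Perm (Fin n))).card •
            ((1 / (n.factorial : ℝ)) * (Zfix n θ - Real.log (n.factorial : ℝ)))
          - (θ / (n.factorial : ℝ)) * ∑ π : Equiv.Perm (Fin n), (fixpts π : ℝ) := by
          rw [Finset.sum_sub_distrib, Finset.sum_const, ← Finset.mul_sum]
      _ = Real.log (Real.exp (Zfix n θ) / n.factorial)
            - θ * ((∑ π : Equiv.Perm (Fin n), (fixpts π : ℝ)) / n.factorial) := by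
          rw [Finset.card_univ, Fintype.card_perm, Fintype.card_fin,
            Real.log_div (Real.exp_ne_zero _) hc, Real.log_exp, nsmul_eq_mul]
          field_simp
  · have h1 : Tendsto (fun n : ℕ => Real.log (Real.exp (Zfix n θ) / n.factorial))
        atTop (nhds (Real.exp θ - 1)) := by
      have heq : (fun n : ℕ => Real.log (Real.exp (Zfix n θ) / n.factorial))
          = fun n : ℕ => Real.log
              (∑ k ∈ Finset.range (n + 1), (Real.exp θ - 1) ^ k / (k.factorial : ℝ)) := by
        funext n; rw [exp_Z_div]
      rw [heq]
      have hcont : ContinuousAt Real.log (Real.exp (Real.exp θ - 1)) :=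
        Real.continuousAt_log (Real.exp_pos _).ne'
      have := hcont.tendsto.comp (tendsto_partial_exp (Real.exp θ - 1))
      rwa [Real.log_exp] at this
    have h2 : Tendsto (fun n : ℕ =>
        θ * ((∑ π : Equiv.Perm (Fin n), (fixpts π : ℝ)) / n.factorial))
        atTop (nhds θ) := by
      apply Tendsto.congr' _ tendsto_const_nhds
      filter_upwards [eventually_ge_atTop 1] with n hn
      have hc : ((n.factorial : ℝ)) ≠ 0 := Nat.cast_ne_zero.mpr n.factorial_ne_zero
      have : (∑ π : Equiv.Perm (Fin n), (fixpts π : ℝ)) = (n.factorial : ℝ) := by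
        exact_mod_cast congrArg (fun m : ℕ => (m : ℝ)) (sum_fix_nat n hn)
      rw [this, div_self hc, mul_one]
    exact h1.sub h2
end

section
/- Let f : [0,1]² → ℝ be continuous, θ ∈ ℝ, and suppose μ is a probability measure on [0,1]² with uniform marginals and density of the form g(x,y) = exp(θ f(x,y) + a(x) + b(y)) with exp(b(·)) integrable over [0,1]. Then e^{−a(x)} = ∫₀¹ e^{θ f(x,y) + b(y)} dy for almost every x, and |e^{−a(x₁)} − e^{−a(x₂)}| ≤ sup_{y∈[0,1]} |e^{θ f(x₁,y)} − e^{θ f(x₂,y)}| · ∫₀¹ e^{b(y)} dy; consequently x ↦ e^{−a(x)} admits a continuous version, so g admits a continuous version. -/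
open MeasureTheory Set

set_option maxHeartbeats 1000000 in
theorem stmt17 (θ : ℝ) (f : ℝ × ℝ → ℝ) (a b : ℝ → ℝ) (g : ℝ → ℝ → ℝ)
    (hf : ContinuousOn f (Set.Icc 0 1 ×ˢ Set.Icc 0 1))
    (hg : ∀ x y, g x y = Real.exp (θ * f (x, y) + a x + b y))
    (hbmeas : Measurable b)
    (hb : IntegrableOn (fun y => Real.exp (b y)) (Set.Icc (0:ℝ) 1))
    (hmarg1 : ∀ᵐ x ∂(volume.restrict (Set.Icc (0:ℝ) 1)), ∫ y in (0:ℝ)..1, g x y = 1)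
    (hmarg2 : ∀ᵐ y ∂(volume.restrict (Set.Icc (0:ℝ) 1)), ∫ x in (0:ℝ)..1, g x y = 1) :
    (∀ᵐ x ∂(volume.restrict (Set.Icc (0:ℝ) 1)),
      Real.exp (-a x) = ∫ y in (0:ℝ)..1, Real.exp (θ * f (x, y) + b y)) ∧
    (∀ x₁ ∈ Set.Icc (0:ℝ) 1, ∀ x₂ ∈ Set.Icc (0:ℝ) 1,
      |(∫ y in (0:ℝ)..1, Real.exp (θ * f (x₁, y) + b y)) -
          ∫ y in (0:ℝ)..1, Real.exp (θ * f (x₂, y) + b y)|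
        ≤ (⨆ y : Set.Icc (0:ℝ) 1,
              |Real.exp (θ * f (x₁, (y : ℝ))) - Real.exp (θ * f (x₂, (y : ℝ)))|) *
            ∫ y in (0:ℝ)..1, Real.exp (b y)) ∧
    (∃ gc : ℝ → ℝ → ℝ,
      ContinuousOn (fun z : ℝ × ℝ => gc z.1 z.2) (Set.Icc 0 1 ×ˢ Set.Icc 0 1) ∧
      ∀ᵐ z ∂(volume.restrict (Set.Icc (0:ℝ) 1 ×ˢ Set.Icc (0:ℝ) 1)),
        gc (z : ℝ × ℝ).1 z.2 = g z.1 z.2) := by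
  have hsq : IsCompact (Icc (0:ℝ) 1 ×ˢ Icc (0:ℝ) 1) := isCompact_Icc.prod isCompact_Icc
  have hcont : ContinuousOn (fun z => Real.exp (θ * f z)) (Icc (0:ℝ) 1 ×ˢ Icc (0:ℝ) 1) :=
    Real.continuous_exp.comp_continuousOn (continuousOn_const.mul hf)
  obtain ⟨C, hC0⟩ := hsq.exists_bound_of_continuousOn hcont
  have hC : ∀ z ∈ Icc (0:ℝ) 1 ×ˢ Icc (0:ℝ) 1, Real.exp (θ * f z) ≤ C := fun z hz =>
    (le_abs_self _).trans (by simpa using hC0 z hz)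
  obtain ⟨D, hD⟩ := hsq.exists_bound_of_continuousOn hf
  set c : ℝ := Real.exp (-(|θ| * D)) with hc_def
  have hc : ∀ z ∈ Icc (0:ℝ) 1 ×ˢ Icc (0:ℝ) 1, c ≤ Real.exp (θ * f z) := by
    intro z hz
    apply Real.exp_le_exp.2
    have h0 : |f z| ≤ D := by simpa using hD z hz
    have h1 : |θ * f z| ≤ |θ| * D := by
      rw [abs_mul]; exact mul_le_mul_of_nonneg_left h0 (abs_nonneg θ)
    have := neg_abs_le (θ * f z)
    linarith
  have hcpos : 0 < c := Real.exp_pos _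
  have hcC : c ≤ C := (hc (0, 0) (by norm_num)).trans (hC (0, 0) (by norm_num))
  have hCpos : 0 < C := hcpos.trans_le hcC
  -- continuity of slices
  have hcy : ∀ x ∈ Icc (0:ℝ) 1,
      ContinuousOn (fun y => Real.exp (θ * f (x, y))) (Icc (0:ℝ) 1) := by
    intro x hx
    exact hcont.comp (Continuous.continuousOn (by continuity)) (fun y hy => ⟨hx, hy⟩)
  have hcx : ∀ y ∈ Icc (0:ℝ) 1,
      ContinuousOn (fun x => Real.exp (θ * f (x, y))) (Icc (0:ℝ) 1) := by
    intro y hy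
    exact hcont.comp (Continuous.continuousOn (by continuity)) (fun x hx => ⟨hx, hy⟩)
  have hbIoc : IntegrableOn (fun y => Real.exp (b y)) (Ioc (0:ℝ) 1) :=
    hb.mono_set Ioc_subset_Icc_self
  -- integrability of the slice integrand
  have hInt : ∀ x ∈ Icc (0:ℝ) 1,
      IntegrableOn (fun y => Real.exp (θ * f (x, y)) * Real.exp (b y)) (Icc (0:ℝ) 1) := by
    intro x hx
    apply Integrable.bdd_mul (c := C) hb
    · exact ((hcy x hx).aestronglyMeasurable measurableSet_Icc)
    · rw [ae_restrict_iff' measurableSet_Icc]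
      filter_upwards with y hy
      rw [Real.norm_eq_abs, abs_of_pos (Real.exp_pos _)]
      exact hC (x, y) ⟨hx, hy⟩
  have hexp_add : ∀ x y, Real.exp (θ * f (x, y) + b y)
      = Real.exp (θ * f (x, y)) * Real.exp (b y) := fun x y => Real.exp_add _ _
  have hInt' : ∀ x ∈ Icc (0:ℝ) 1,
      IntervalIntegrable (fun y => Real.exp (θ * f (x, y) + b y)) volume 0 1 := by
    intro x hx
    apply IntegrableOn.intervalIntegrable
    rw [uIcc_of_le (zero_le_one)]
    exact (hInt x hx).congr_fun (fun y _ => (hexp_add x y).symm) measurableSet_Icc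
  -- A
  set A : ℝ → ℝ := fun x => ∫ y in Ioc (0:ℝ) 1, Real.exp (θ * f (x, y)) * Real.exp (b y)
    with hA_def
  have hA_eq : ∀ x, (∫ y in (0:ℝ)..1, Real.exp (θ * f (x, y) + b y)) = A x := by
    intro x
    rw [intervalIntegral.integral_of_le zero_le_one, hA_def]
    exact setIntegral_congr_fun measurableSet_Ioc (fun y _ => hexp_add x y)
  -- part 1
  have part1 : ∀ᵐ x ∂(volume.restrict (Set.Icc (0:ℝ) 1)),
      Real.exp (-a x) = ∫ y in (0:ℝ)..1, Real.exp (θ * f (x, y) + b y) := by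
    filter_upwards [hmarg1] with x hx
    have key : Real.exp (a x) * (∫ y in (0:ℝ)..1, Real.exp (θ * f (x, y) + b y)) = 1 := by
      calc Real.exp (a x) * (∫ y in (0:ℝ)..1, Real.exp (θ * f (x, y) + b y))
          = ∫ y in (0:ℝ)..1, g x y := by
            rw [← intervalIntegral.integral_const_mul]
            apply intervalIntegral.integral_congr
            intro y _
            simp only [hg]
            rw [← Real.exp_add]
            ring_nf
        _ = 1 := hx
    rw [Real.exp_neg]
    exact (eq_inv_of_mul_eq_one_right key).symm
  refine ⟨part1, ?_, ?_⟩
  · -- part 2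
    intro x₁ hx₁ x₂ hx₂
    set M : ℝ := ⨆ y : Set.Icc (0:ℝ) 1,
        |Real.exp (θ * f (x₁, (y : ℝ))) - Real.exp (θ * f (x₂, (y : ℝ)))| with hM_def
    have hFc : Continuous (fun y : Set.Icc (0:ℝ) 1 =>
        |Real.exp (θ * f (x₁, (y : ℝ))) - Real.exp (θ * f (x₂, (y : ℝ)))|) := by
      apply Continuous.abs
      apply Continuous.sub
      · exact (hcy x₁ hx₁).comp_continuous continuous_subtype_val (fun y => y.2)
      · exact (hcy x₂ hx₂).comp_continuous continuous_subtype_val (fun y => y.2)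
    have hbdd : BddAbove (Set.range (fun y : Set.Icc (0:ℝ) 1 =>
        |Real.exp (θ * f (x₁, (y : ℝ))) - Real.exp (θ * f (x₂, (y : ℝ)))|)) :=
      (isCompact_range hFc).bddAbove
    have hM : ∀ y ∈ Icc (0:ℝ) 1,
        |Real.exp (θ * f (x₁, y)) - Real.exp (θ * f (x₂, y))| ≤ M :=
      fun y hy => le_ciSup hbdd ⟨y, hy⟩
    have hbi : IntervalIntegrable (fun y => Real.exp (b y)) volume 0 1 := by
      apply IntegrableOn.intervalIntegrable; rwa [uIcc_of_le (zero_le_one)]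
    have h1 := hInt' x₁ hx₁
    have h2 := hInt' x₂ hx₂
    rw [← intervalIntegral.integral_sub h1 h2]
    calc |∫ y in (0:ℝ)..1, (Real.exp (θ * f (x₁, y) + b y) - Real.exp (θ * f (x₂, y) + b y))|
        ≤ ∫ y in (0:ℝ)..1, |Real.exp (θ * f (x₁, y) + b y) - Real.exp (θ * f (x₂, y) + b y)| :=
          intervalIntegral.abs_integral_le_integral_abs zero_le_one
      _ ≤ ∫ y in (0:ℝ)..1, M * Real.exp (b y) := by
          apply intervalIntegral.integral_mono_on zero_le_one ((h1.sub h2).abs)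
            (hbi.const_mul M)
          intro y hy
          rw [hexp_add, hexp_add, ← sub_mul, abs_mul, abs_of_pos (Real.exp_pos _)]
          exact mul_le_mul_of_nonneg_right (hM y hy) (Real.exp_pos _).le
      _ = M * ∫ y in (0:ℝ)..1, Real.exp (b y) := intervalIntegral.integral_const_mul _ _
  · -- part 3
    -- A bounds
    set I : ℝ := ∫ y in Ioc (0:ℝ) 1, Real.exp (b y) with hI_def
    have hIpos : 0 < I := by
      have : 0 < ∫ y in (0:ℝ)..1, Real.exp (b y) := by
        apply intervalIntegral.intervalIntegral_pos_of_pos _ (fun y => Real.exp_pos _) one_pos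
        apply IntegrableOn.intervalIntegrable; rwa [uIcc_of_le (zero_le_one)]
      rwa [intervalIntegral.integral_of_le zero_le_one] at this
    have hIntIoc : ∀ x ∈ Icc (0:ℝ) 1,
        IntegrableOn (fun y => Real.exp (θ * f (x, y)) * Real.exp (b y)) (Ioc (0:ℝ) 1) :=
      fun x hx => (hInt x hx).mono_set Ioc_subset_Icc_self
    have hA_ge : ∀ x ∈ Icc (0:ℝ) 1, c * I ≤ A x := by
      intro x hx
      rw [hA_def, hI_def]
      rw [← integral_const_mul]
      apply setIntegral_mono_on (hbIoc.const_mul c) (hIntIoc x hx) measurableSet_Ioc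
      intro y hy
      exact mul_le_mul_of_nonneg_right (hc (x, y) ⟨hx, Ioc_subset_Icc_self hy⟩)
        (Real.exp_pos _).le
    have hA_le : ∀ x ∈ Icc (0:ℝ) 1, A x ≤ C * I := by
      intro x hx
      rw [hA_def, hI_def, ← integral_const_mul]
      apply setIntegral_mono_on (hIntIoc x hx) (hbIoc.const_mul C) measurableSet_Ioc
      intro y hy
      exact mul_le_mul_of_nonneg_right (hC (x, y) ⟨hx, Ioc_subset_Icc_self hy⟩)
        (Real.exp_pos _).le
    have hApos : ∀ x ∈ Icc (0:ℝ) 1, 0 < A x :=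
      fun x hx => (mul_pos hcpos hIpos).trans_le (hA_ge x hx)
    -- continuity of A on Icc
    have hA_cont : ContinuousOn A (Icc (0:ℝ) 1) := by
      intro x₀ hx₀
      apply continuousWithinAt_of_dominated (bound := fun y => C * Real.exp (b y))
      · filter_upwards [self_mem_nhdsWithin] with x hx
        exact (((hcy x hx).mono Ioc_subset_Icc_self).aestronglyMeasurable
          measurableSet_Ioc).mul ((hbmeas.exp).aestronglyMeasurable)
      · filter_upwards [self_mem_nhdsWithin] with x hx
        rw [ae_restrict_iff' measurableSet_Ioc]
        filter_upwards with y hy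
        rw [Real.norm_eq_abs, abs_mul, abs_of_pos (Real.exp_pos _),
          abs_of_pos (Real.exp_pos _)]
        exact mul_le_mul_of_nonneg_right (hC (x, y) ⟨hx, Ioc_subset_Icc_self hy⟩)
          (Real.exp_pos _).le
      · exact hbIoc.const_mul C
      · rw [ae_restrict_iff' measurableSet_Ioc]
        filter_upwards with y hy
        have hyI : y ∈ Icc (0:ℝ) 1 := Ioc_subset_Icc_self hy
        have h1 : ContinuousWithinAt (fun x => f (x, y)) (Icc (0:ℝ) 1) x₀ :=
          ContinuousWithinAt.comp (hf (x₀, y) ⟨hx₀, hyI⟩)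
            ((continuous_id.prodMk continuous_const).continuousWithinAt)
            (fun x hx => ⟨hx, hyI⟩)
        exact ((Real.continuous_exp.continuousAt.comp_continuousWithinAt
          (continuousWithinAt_const.mul h1)).mul continuousWithinAt_const)
    -- B
    have hA_invcont : ContinuousOn (fun x => (A x)⁻¹) (Icc (0:ℝ) 1) :=
      hA_cont.inv₀ (fun x hx => (hApos x hx).ne')
    have hBint_cont : ∀ y ∈ Icc (0:ℝ) 1,
        ContinuousOn (fun x => Real.exp (θ * f (x, y)) * (A x)⁻¹) (Icc (0:ℝ) 1) :=
      fun y hy => (hcx y hy).mul hA_invcont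
    set B : ℝ → ℝ := fun y => ∫ x in Ioc (0:ℝ) 1, Real.exp (θ * f (x, y)) * (A x)⁻¹
      with hB_def
    have hBbd : ∀ y ∈ Icc (0:ℝ) 1, ∀ x ∈ Icc (0:ℝ) 1,
        c * (C * I)⁻¹ ≤ Real.exp (θ * f (x, y)) * (A x)⁻¹ ∧
        Real.exp (θ * f (x, y)) * (A x)⁻¹ ≤ C * (c * I)⁻¹ := by
      intro y hy x hx
      have hApos' := hApos x hx
      constructor
      · apply mul_le_mul (hc (x, y) ⟨hx, hy⟩) _ (by positivity) (Real.exp_pos _).le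
        exact inv_anti₀ hApos' (hA_le x hx)
      · apply mul_le_mul (hC (x, y) ⟨hx, hy⟩) _ (by positivity) hCpos.le
        exact inv_anti₀ (mul_pos hcpos hIpos) (hA_ge x hx)
    have hBIntg : ∀ y ∈ Icc (0:ℝ) 1,
        IntegrableOn (fun x => Real.exp (θ * f (x, y)) * (A x)⁻¹) (Ioc (0:ℝ) 1) :=
      fun y hy => ((hBint_cont y hy).integrableOn_Icc).mono_set Ioc_subset_Icc_self
    have hmeasIoc : (volume (Ioc (0:ℝ) 1)).toReal = 1 := by simp
    have hBpos : ∀ y ∈ Icc (0:ℝ) 1, 0 < B y := by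
      intro y hy
      have h1 : (volume (Ioc (0:ℝ) 1)).toReal • (c * (C * I)⁻¹) ≤ B y := by
        rw [← measureReal_def, ← setIntegral_const]
        exact setIntegral_mono_on (integrableOn_const (by simp))
          (hBIntg y hy) measurableSet_Ioc
          (fun x hx => (hBbd y hy x (Ioc_subset_Icc_self hx)).1)
      rw [smul_eq_mul, hmeasIoc, one_mul] at h1
      have h2 : 0 < c * (C * I)⁻¹ := by positivity
      linarith
    have hB_cont : ContinuousOn B (Icc (0:ℝ) 1) := by
      intro y₀ hy₀
      apply continuousWithinAt_of_dominated (bound := fun _ => C * (c * I)⁻¹)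
      · filter_upwards [self_mem_nhdsWithin] with y hy
        exact (((hBint_cont y hy).mono Ioc_subset_Icc_self).aestronglyMeasurable
          measurableSet_Ioc)
      · filter_upwards [self_mem_nhdsWithin] with y hy
        rw [ae_restrict_iff' measurableSet_Ioc]
        filter_upwards with x hx
        have hxI : x ∈ Icc (0:ℝ) 1 := Ioc_subset_Icc_self hx
        have h0 : 0 < Real.exp (θ * f (x, y)) * (A x)⁻¹ := by
          have := hApos x hxI; positivity
        rw [Real.norm_eq_abs, abs_of_pos h0]
        exact (hBbd y hy x hxI).2
      · exact integrable_const _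
      · rw [ae_restrict_iff' measurableSet_Ioc]
        filter_upwards with x hx
        have hxI : x ∈ Icc (0:ℝ) 1 := Ioc_subset_Icc_self hx
        have h1 : ContinuousWithinAt (fun y => f (x, y)) (Icc (0:ℝ) 1) y₀ :=
          ContinuousWithinAt.comp (hf (x, y₀) ⟨hxI, hy₀⟩)
            ((continuous_const.prodMk continuous_id).continuousWithinAt)
            (fun y hy => ⟨hxI, hy⟩)
        exact ((Real.continuous_exp.continuousAt.comp_continuousWithinAt
          (continuousWithinAt_const.mul h1)).mul continuousWithinAt_const)
    -- a.e. identities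
    have h_ea : ∀ᵐ x ∂(volume.restrict (Icc (0:ℝ) 1)), Real.exp (a x) = (A x)⁻¹ := by
      filter_upwards [part1] with x hx
      rw [hA_eq] at hx
      rw [← hx, Real.exp_neg, inv_inv]
    have h_eb : ∀ᵐ y ∂(volume.restrict (Icc (0:ℝ) 1)), Real.exp (b y) = (B y)⁻¹ := by
      have h_ea' : ∀ᵐ x ∂(volume.restrict (Ioc (0:ℝ) 1)), Real.exp (a x) = (A x)⁻¹ :=
        Filter.Eventually.filter_mono
          (ae_mono (Measure.restrict_mono Ioc_subset_Icc_self le_rfl)) h_ea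
      filter_upwards [hmarg2, ae_restrict_mem measurableSet_Icc] with y hy hyI
      have key : Real.exp (b y) * B y = 1 := by
        calc Real.exp (b y) * B y
            = ∫ x in Ioc (0:ℝ) 1, Real.exp (b y) * (Real.exp (θ * f (x, y)) * (A x)⁻¹) := by
              rw [hB_def, ← integral_const_mul]
          _ = ∫ x in Ioc (0:ℝ) 1, Real.exp (θ * f (x, y) + a x + b y) := by
              apply integral_congr_ae
              filter_upwards [h_ea'] with x hx
              rw [← hx, ← Real.exp_add, ← Real.exp_add]
              ring_nf
          _ = ∫ x in (0:ℝ)..1, g x y := by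
              rw [intervalIntegral.integral_of_le zero_le_one]
              exact (setIntegral_congr_fun measurableSet_Ioc (fun x _ => (hg x y))).symm
          _ = 1 := hy
      exact eq_inv_of_mul_eq_one_left key
    -- the continuous version
    refine ⟨fun x y => Real.exp (θ * f (x, y)) * (A x)⁻¹ * (B y)⁻¹, ?_, ?_⟩
    · have hBinvc : ContinuousOn (fun y => (B y)⁻¹) (Icc (0:ℝ) 1) :=
        hB_cont.inv₀ (fun y hy => (hBpos y hy).ne')
      have c1 : ContinuousOn (fun z : ℝ × ℝ => (A z.1)⁻¹) (Icc (0:ℝ) 1 ×ˢ Icc (0:ℝ) 1) :=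
        hA_invcont.comp continuous_fst.continuousOn (fun z hz => hz.1)
      have c2 : ContinuousOn (fun z : ℝ × ℝ => (B z.2)⁻¹) (Icc (0:ℝ) 1 ×ˢ Icc (0:ℝ) 1) :=
        hBinvc.comp continuous_snd.continuousOn (fun z hz => hz.2)
      have := (hcont.mul c1).mul c2
      simpa only [Prod.mk.eta, Pi.mul_def] using this
    · rw [Measure.volume_eq_prod, ← Measure.prod_restrict]
      have h1 : ∀ᵐ z : ℝ × ℝ ∂((volume.restrict (Icc (0:ℝ) 1)).prod
          (volume.restrict (Icc (0:ℝ) 1))), Real.exp (a z.1) = (A z.1)⁻¹ :=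
        Measure.quasiMeasurePreserving_fst.ae h_ea
      have h2 : ∀ᵐ z : ℝ × ℝ ∂((volume.restrict (Icc (0:ℝ) 1)).prod
          (volume.restrict (Icc (0:ℝ) 1))), Real.exp (b z.2) = (B z.2)⁻¹ :=
        Measure.quasiMeasurePreserving_snd.ae h_eb
      filter_upwards [h1, h2] with z e1 e2
      rw [hg, Real.exp_add, Real.exp_add, e1, e2]
end
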